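/- The transformed covariance of sine under a centered bivariate Gaussian satisfies τ(sin, sin) = e^{−(σii+σjj)/2}·sinh σij; equivalently, since sin is odd so its transformed mean vanishes, ∫_{ℝ²} sin(x)·sin(w)·p(x,w) dx dw = e^{−(σii+σjj)/2}·sinh σij. -/

import Mathlib

open MeasureTheory Real

/-- Centered bivariate Gaussian density with covariance entries `σii, σjj, σij`. -/
noncomputable def gaussPDF2 (σii σjj σij : ℝ) (x w : ℝ) : ℝ :=
  (1 / (2 * π * Real.sqrt (σii * σjj - σij ^ 2))) *
    Real.exp (-(σjj * x ^ 2 - 2 * σij * x * w + σii * w ^ 2) / (2 * (σii * σjj - σij ^ 2)))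

/-- Centered univariate Gaussian density with variance `σ`. -/
noncomputable def gaussPDF1 (σ x : ℝ) : ℝ :=
  (1 / Real.sqrt (2 * π * σ)) * Real.exp (-x ^ 2 / (2 * σ))

/-- Transformed mean `ν(f)`. -/
noncomputable def transMean (σ : ℝ) (f : ℝ → ℝ) : ℝ := ∫ x : ℝ, f x * gaussPDF1 σ x

/-- Transformed covariance `τ(f, g)`. -/
noncomputable def transCov (σii σjj σij : ℝ) (f g : ℝ → ℝ) : ℝ :=
  (∫ q : ℝ × ℝ, f q.1 * g q.2 * gaussPDF2 σii σjj σij q.1 q.2) -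
    transMean σii f * transMean σjj g

open Complex in
lemma gauss_fourier_aux {s : ℝ} (hs : 0 < s) (c : ℝ) :
    (∫ x : ℝ, Real.cos (c * x) * Real.exp (-x ^ 2 / (2 * s))) =
      Real.sqrt (2 * π * s) * Real.exp (-(s * c ^ 2) / 2) ∧
    (∫ x : ℝ, Real.sin (c * x) * Real.exp (-x ^ 2 / (2 * s))) = 0 := by
  set b : ℂ := ((1 / (2 * s) : ℝ) : ℂ) with hbdef
  have hbre : 0 < b.re := by rw [hbdef]; simp; positivity
  have hpt : ∀ x : ℝ, cexp (I * (c : ℂ) * x) * cexp (-b * (x : ℂ) ^ 2) =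
      Complex.ofReal (Real.cos (c * x) * Real.exp (-x ^ 2 / (2 * s))) +
      Complex.ofReal (Real.sin (c * x) * Real.exp (-x ^ 2 / (2 * s))) * I := by
    intro x
    have h1 : (I * (c : ℂ) * x) = ((c * x : ℝ) : ℂ) * I := by push_cast; ring
    have h2 : (-b * (x : ℂ) ^ 2) = ((-x ^ 2 / (2 * s) : ℝ) : ℂ) := by
      rw [hbdef]; push_cast; field_simp
    rw [h1, h2, Complex.exp_mul_I, ← Complex.ofReal_exp, ← Complex.ofReal_cos,
      ← Complex.ofReal_sin]
    push_cast; ring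
  have hint : Integrable (fun x : ℝ => cexp (I * c * x) * cexp (-b * x ^ 2)) := by
    have h := integrable_cexp_quadratic hbre (I * c) 0
    refine h.congr (Filter.Eventually.of_forall fun x => ?_)
    dsimp only
    rw [← Complex.exp_add]; ring_nf
  have hval : (∫ x : ℝ, cexp (I * c * x) * cexp (-b * x ^ 2)) =
      Complex.ofReal (Real.sqrt (2 * π * s) * Real.exp (-(s * c ^ 2) / 2)) := by
    rw [fourierIntegral_gaussian hbre c]
    have h3 : ((π : ℂ) / b) = ((2 * π * s : ℝ) : ℂ) := by
      rw [hbdef]; push_cast; field_simp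
    have h4 : (-(c : ℂ) ^ 2 / (4 * b)) = ((-(s * c ^ 2) / 2 : ℝ) : ℂ) := by
      rw [hbdef]; push_cast; field_simp; ring
    rw [h3, h4, ← Complex.ofReal_exp,
      show ((1 : ℂ) / 2) = ((1 / 2 : ℝ) : ℂ) by norm_num,
      ← Complex.ofReal_cpow (by positivity) (1 / 2 : ℝ), ← Real.sqrt_eq_rpow,
      ← Complex.ofReal_mul]
  have hre := integral_re hint
  have him := integral_im hint
  simp only [RCLike.re_to_complex, RCLike.im_to_complex, hval, Complex.ofReal_re,
    Complex.ofReal_im] at hre him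
  have hre' : (fun x : ℝ => Real.cos (c * x) * Real.exp (-x ^ 2 / (2 * s))) =
      fun x : ℝ => (cexp (I * c * x) * cexp (-b * x ^ 2)).re := by
    funext x
    rw [hpt x]
    simp only [Complex.add_re, Complex.ofReal_re, Complex.mul_I_re, Complex.ofReal_im]
    ring
  have him' : (fun x : ℝ => Real.sin (c * x) * Real.exp (-x ^ 2 / (2 * s))) =
      fun x : ℝ => (cexp (I * c * x) * cexp (-b * x ^ 2)).im := by
    funext x
    rw [hpt x]
    simp only [Complex.add_im, Complex.ofReal_im, Complex.mul_I_im, Complex.ofReal_re]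
    ring
  exact ⟨by rw [hre', hre], by rw [him', him]⟩

lemma gaussPDF1_nonneg (σ x : ℝ) : 0 ≤ gaussPDF1 σ x := by
  unfold gaussPDF1; positivity

lemma gaussPDF1_integrable {s : ℝ} (hs : 0 < s) : Integrable (gaussPDF1 s) := by
  unfold gaussPDF1
  have h : (fun x : ℝ => Real.exp (-x ^ 2 / (2 * s))) =
      fun x : ℝ => Real.exp (-((2 * s)⁻¹) * x ^ 2) := by
    funext x; congr 1; field_simp
  refine Integrable.const_mul ?_ _
  rw [h]
  exact integrable_exp_neg_mul_sq (by positivity)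

lemma cos_gauss_integrable {s : ℝ} (hs : 0 < s) (c : ℝ) :
    Integrable (fun x : ℝ => Real.cos (c * x) * gaussPDF1 s x) := by
  refine (gaussPDF1_integrable hs).bdd_mul (c := 1) ?_ (Filter.Eventually.of_forall fun x => ?_)
  · exact (Real.continuous_cos.comp (continuous_const.mul continuous_id)).aestronglyMeasurable
  · simpa [Real.norm_eq_abs] using Real.abs_cos_le_one (c * x)

lemma sin_gauss_integrable {s : ℝ} (hs : 0 < s) (c : ℝ) :
    Integrable (fun x : ℝ => Real.sin (c * x) * gaussPDF1 s x) := by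
  refine (gaussPDF1_integrable hs).bdd_mul (c := 1) ?_ (Filter.Eventually.of_forall fun x => ?_)
  · exact (Real.continuous_sin.comp (continuous_const.mul continuous_id)).aestronglyMeasurable
  · simpa [Real.norm_eq_abs] using Real.abs_sin_le_one (c * x)

lemma cos_mul_gaussPDF1 {s : ℝ} (hs : 0 < s) (c : ℝ) :
    ∫ x : ℝ, Real.cos (c * x) * gaussPDF1 s x = Real.exp (-(s * c ^ 2) / 2) := by
  have h := (gauss_fourier_aux hs c).1
  have hsq : Real.sqrt (2 * π * s) ≠ 0 := by positivity
  have hrw : ∀ x : ℝ, Real.cos (c * x) * gaussPDF1 s x =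
      (1 / Real.sqrt (2 * π * s)) * (Real.cos (c * x) * Real.exp (-x ^ 2 / (2 * s))) := by
    intro x; unfold gaussPDF1; ring
  simp only [hrw]
  rw [integral_const_mul, h]
  field_simp

lemma sin_mul_gaussPDF1 {s : ℝ} (hs : 0 < s) (c : ℝ) :
    ∫ x : ℝ, Real.sin (c * x) * gaussPDF1 s x = 0 := by
  have h := (gauss_fourier_aux hs c).2
  have hrw : ∀ x : ℝ, Real.sin (c * x) * gaussPDF1 s x =
      (1 / Real.sqrt (2 * π * s)) * (Real.sin (c * x) * Real.exp (-x ^ 2 / (2 * s))) := by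
    intro x; unfold gaussPDF1; ring
  simp only [hrw]
  rw [integral_const_mul, h, mul_zero]

lemma sin_gauss_shift {s : ℝ} (hs : 0 < s) (m : ℝ) :
    ∫ w : ℝ, Real.sin w * gaussPDF1 s (w - m) = Real.exp (-s / 2) * Real.sin m := by
  rw [← integral_add_right_eq_self (fun w => Real.sin w * gaussPDF1 s (w - m)) m]
  have hsplit : ∀ x : ℝ, Real.sin (x + m) * gaussPDF1 s (x + m - m) =
      Real.cos m * (Real.sin (1 * x) * gaussPDF1 s x) +
      Real.sin m * (Real.cos (1 * x) * gaussPDF1 s x) := by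
    intro x
    rw [add_sub_cancel_right, Real.sin_add]
    simp only [one_mul]
    ring
  simp only [hsplit]
  rw [integral_add ((sin_gauss_integrable hs 1).const_mul _)
    ((cos_gauss_integrable hs 1).const_mul _), integral_const_mul, integral_const_mul,
    sin_mul_gaussPDF1 hs 1, cos_mul_gaussPDF1 hs 1]
  norm_num [mul_comm]

lemma gauss2_factor {σii σjj σij : ℝ} (hii : 0 < σii) (hd : 0 < σii * σjj - σij ^ 2)
    (x w : ℝ) :
    gaussPDF2 σii σjj σij x w =
      gaussPDF1 σii x *
        gaussPDF1 ((σii * σjj - σij ^ 2) / σii) (w - σij / σii * x) := by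
  have h0 : σii ≠ 0 := hii.ne'
  have h1 : σii * σjj - σij ^ 2 ≠ 0 := hd.ne'
  unfold gaussPDF2 gaussPDF1
  have hconst : Real.sqrt (2 * π * σii) * Real.sqrt (2 * π * ((σii * σjj - σij ^ 2) / σii)) =
      2 * π * Real.sqrt (σii * σjj - σij ^ 2) := by
    rw [← Real.sqrt_mul (by positivity),
      show (2 * π * σii) * (2 * π * ((σii * σjj - σij ^ 2) / σii)) =
        (2 * π) ^ 2 * (σii * σjj - σij ^ 2) by field_simp,
      Real.sqrt_mul (by positivity), Real.sqrt_sq (by positivity)]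
  have hexp : Real.exp (-(σjj * x ^ 2 - 2 * σij * x * w + σii * w ^ 2) /
        (2 * (σii * σjj - σij ^ 2))) =
      Real.exp (-x ^ 2 / (2 * σii)) *
        Real.exp (-(w - σij / σii * x) ^ 2 / (2 * ((σii * σjj - σij ^ 2) / σii))) := by
    rw [← Real.exp_add]; congr 1
    rw [div_add_div _ _ (by positivity) (by positivity), div_eq_div_iff (by positivity) (by positivity)]
    field_simp; ring
  rw [hexp, ← hconst]
  ring

theorem transformed_covariance_sin
    (σii σjj σij : ℝ) (hii : 0 < σii) (hjj : 0 < σjj)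
    (hd : 0 < σii * σjj - σij ^ 2) :
    transCov σii σjj σij Real.sin Real.sin =
      Real.exp (-(σii + σjj) / 2) * Real.sinh σij ∧
    ∫ q : ℝ × ℝ, Real.sin q.1 * Real.sin q.2 * gaussPDF2 σii σjj σij q.1 q.2 =
      Real.exp (-(σii + σjj) / 2) * Real.sinh σij := by
  have h0 : σii ≠ 0 := hii.ne'
  set s2 : ℝ := (σii * σjj - σij ^ 2) / σii with hs2def
  set a : ℝ := σij / σii with hadef
  have hs2 : 0 < s2 := div_pos hd hii
  -- transformed means vanish
  have hmean : ∀ σ : ℝ, 0 < σ → transMean σ Real.sin = 0 := by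
    intro σ hσ
    unfold transMean
    have h := sin_mul_gaussPDF1 hσ 1
    simpa using h
  -- pointwise factorization
  have hF : ∀ q : ℝ × ℝ, Real.sin q.1 * Real.sin q.2 * gaussPDF2 σii σjj σij q.1 q.2 =
      (Real.sin q.1 * gaussPDF1 σii q.1) * (Real.sin q.2 * gaussPDF1 s2 (q.2 - a * q.1)) := by
    intro q; rw [gauss2_factor hii hd]; ring
  -- measurability
  have hmeas : AEStronglyMeasurable
      (fun q : ℝ × ℝ => Real.sin q.1 * Real.sin q.2 * gaussPDF2 σii σjj σij q.1 q.2)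
      ((volume : Measure ℝ).prod (volume : Measure ℝ)) := by
    rw [← Measure.volume_eq_prod]
    apply Continuous.aestronglyMeasurable
    unfold gaussPDF2
    fun_prop
  -- integrability of vertical slices
  have hinner : ∀ x : ℝ,
      Integrable (fun w : ℝ => Real.sin w * gaussPDF1 s2 (w - a * x)) := by
    intro x
    refine ((gaussPDF1_integrable hs2).comp_sub_right (a * x)).bdd_mul (c := 1)
      Real.continuous_sin.aestronglyMeasurable (Filter.Eventually.of_forall fun w => ?_)
    simpa [Real.norm_eq_abs] using Real.abs_sin_le_one w
  -- pointwise bound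
  have hb1 : ∀ x w : ℝ,
      ‖Real.sin x * Real.sin w * gaussPDF2 σii σjj σij x w‖ ≤
        gaussPDF1 σii x * gaussPDF1 s2 (w - a * x) := by
    intro x w
    have e1 : |Real.sin x * gaussPDF1 σii x| ≤ gaussPDF1 σii x := by
      rw [abs_mul, abs_of_nonneg (gaussPDF1_nonneg _ _)]
      exact mul_le_of_le_one_left (gaussPDF1_nonneg _ _) (Real.abs_sin_le_one x)
    have e2 : |Real.sin w * gaussPDF1 s2 (w - a * x)| ≤ gaussPDF1 s2 (w - a * x) := by
      rw [abs_mul, abs_of_nonneg (gaussPDF1_nonneg _ _)]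
      exact mul_le_of_le_one_left (gaussPDF1_nonneg _ _) (Real.abs_sin_le_one w)
    rw [Real.norm_eq_abs, hF (x, w), abs_mul]
    exact mul_le_mul e1 e2 (abs_nonneg _) (gaussPDF1_nonneg _ _)
  -- product integrability
  have hprod : Integrable
      (fun q : ℝ × ℝ => Real.sin q.1 * Real.sin q.2 * gaussPDF2 σii σjj σij q.1 q.2)
      ((volume : Measure ℝ).prod (volume : Measure ℝ)) := by
    refine (integrable_prod_iff hmeas).2 ⟨Filter.Eventually.of_forall fun x => ?_, ?_⟩
    · have : (fun w : ℝ => Real.sin x * Real.sin w * gaussPDF2 σii σjj σij x w) =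
          fun w : ℝ => (Real.sin x * gaussPDF1 σii x) *
            (Real.sin w * gaussPDF1 s2 (w - a * x)) := by
        funext w; exact hF (x, w)
      simpa only [this] using (hinner x).const_mul (Real.sin x * gaussPDF1 σii x)
    · refine Integrable.mono ((gaussPDF1_integrable hii).mul_const
        (∫ w : ℝ, gaussPDF1 s2 w)) (hmeas.norm.integral_prod_right') ?_
      refine Filter.Eventually.of_forall fun x => ?_
      have hIle : (∫ w : ℝ, ‖Real.sin x * Real.sin w * gaussPDF2 σii σjj σij x w‖) ≤
          gaussPDF1 σii x * ∫ w : ℝ, gaussPDF1 s2 w := by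
        have step : (∫ w : ℝ, ‖Real.sin x * Real.sin w * gaussPDF2 σii σjj σij x w‖) ≤
            ∫ w : ℝ, gaussPDF1 σii x * gaussPDF1 s2 (w - a * x) := by
          refine integral_mono_of_nonneg (Filter.Eventually.of_forall fun w => norm_nonneg _)
            (((gaussPDF1_integrable hs2).comp_sub_right (a * x)).const_mul _)
            (Filter.Eventually.of_forall fun w => hb1 x w)
        calc (∫ w : ℝ, ‖Real.sin x * Real.sin w * gaussPDF2 σii σjj σij x w‖)
            ≤ ∫ w : ℝ, gaussPDF1 σii x * gaussPDF1 s2 (w - a * x) := step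
          _ = gaussPDF1 σii x * ∫ w : ℝ, gaussPDF1 s2 (w - a * x) := integral_const_mul _ _
          _ = gaussPDF1 σii x * ∫ w : ℝ, gaussPDF1 s2 w := by
              congr 1
              simpa [sub_eq_add_neg] using
                integral_add_right_eq_self (fun w : ℝ => gaussPDF1 s2 w) (-(a * x))
      have hnn : 0 ≤ ∫ w : ℝ, ‖Real.sin x * Real.sin w * gaussPDF2 σii σjj σij x w‖ :=
        integral_nonneg fun w => norm_nonneg _
      rw [Real.norm_eq_abs, Real.norm_eq_abs, abs_of_nonneg hnn]
      exact hIle.trans (le_abs_self _)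
  -- compute the double integral
  have hdouble : (∫ q : ℝ × ℝ, Real.sin q.1 * Real.sin q.2 * gaussPDF2 σii σjj σij q.1 q.2) =
      Real.exp (-(σii + σjj) / 2) * Real.sinh σij := by
    rw [Measure.volume_eq_prod, integral_prod _ hprod]
    have hin : ∀ x : ℝ,
        (∫ w : ℝ, Real.sin x * Real.sin w * gaussPDF2 σii σjj σij x w) =
          Real.exp (-s2 / 2) * (Real.sin x * Real.sin (a * x) * gaussPDF1 σii x) := by
      intro x
      have : (fun w : ℝ => Real.sin x * Real.sin w * gaussPDF2 σii σjj σij x w) =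
          fun w : ℝ => (Real.sin x * gaussPDF1 σii x) *
            (Real.sin w * gaussPDF1 s2 (w - a * x)) := by
        funext w; exact hF (x, w)
      rw [this, integral_const_mul, sin_gauss_shift hs2 (a * x)]
      ring
    simp only [hin]
    rw [integral_const_mul]
    have hps : ∀ x : ℝ, Real.sin x * Real.sin (a * x) * gaussPDF1 σii x =
        (Real.cos ((1 - a) * x) * gaussPDF1 σii x) / 2 -
        (Real.cos ((1 + a) * x) * gaussPDF1 σii x) / 2 := by
      intro x
      have h := Real.cos_sub_cos ((1 - a) * x) ((1 + a) * x)
      rw [show ((1 - a) * x + (1 + a) * x) / 2 = x by ring,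
        show ((1 - a) * x - (1 + a) * x) / 2 = -(a * x) by ring, Real.sin_neg] at h
      rw [div_sub_div_same, ← sub_mul, h]
      ring
    simp only [hps]
    rw [integral_sub ((cos_gauss_integrable hii (1 - a)).div_const 2)
      ((cos_gauss_integrable hii (1 + a)).div_const 2), integral_div, integral_div,
      cos_mul_gaussPDF1 hii (1 - a), cos_mul_gaussPDF1 hii (1 + a)]
    have e1 : Real.exp (-s2 / 2) * Real.exp (-(σii * (1 - a) ^ 2) / 2) =
        Real.exp (-(σii + σjj) / 2) * Real.exp σij := by
      rw [← Real.exp_add, ← Real.exp_add]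
      congr 1
      rw [hs2def, hadef]
      field_simp
      ring
    have e2 : Real.exp (-s2 / 2) * Real.exp (-(σii * (1 + a) ^ 2) / 2) =
        Real.exp (-(σii + σjj) / 2) * Real.exp (-σij) := by
      rw [← Real.exp_add, ← Real.exp_add]
      congr 1
      rw [hs2def, hadef]
      field_simp
      ring
    calc Real.exp (-s2 / 2) *
          (Real.exp (-(σii * (1 - a) ^ 2) / 2) / 2 - Real.exp (-(σii * (1 + a) ^ 2) / 2) / 2)
        = (Real.exp (-s2 / 2) * Real.exp (-(σii * (1 - a) ^ 2) / 2) -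
            Real.exp (-s2 / 2) * Real.exp (-(σii * (1 + a) ^ 2) / 2)) / 2 := by ring
      _ = Real.exp (-(σii + σjj) / 2) * Real.sinh σij := by
          rw [e1, e2, Real.sinh_eq]; ring
  refine ⟨?_, hdouble⟩
  unfold transCov
  rw [hmean σii hii, hmean σjj hjj, hdouble]
  ring
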